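/- Let f be convex on (0,∞) with f(1)=0, f of class C² on a neighborhood of 1, and f''(1)>0, and let α > 1/2. Then D_f(p_{0,σ1} : p_{0,σ2})^α is not a metric in the scale parameter σ ∈ (0,∞): there exist σ1, σ2, σ3 > 0 with D_f(p_{0,σ1}:p_{0,σ3})^α > D_f(p_{0,σ1}:p_{0,σ2})^α + D_f(p_{0,σ2}:p_{0,σ3})^α. -/

import Mathlib

open MeasureTheory

noncomputable def cauchyPdf (μ σ x : ℝ) : ℝ := (σ / Real.pi) * (1 / ((x - μ) ^ 2 + σ ^ 2))

/-- f-divergence between centered Cauchy distributions with scales `σ₁`, `σ₂`. -/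
noncomputable def fDivCauchy (f : ℝ → ℝ) (σ₁ σ₂ : ℝ) : ℝ :=
  ∫ x, f (cauchyPdf 0 σ₂ x / cauchyPdf 0 σ₁ x) * cauchyPdf 0 σ₁ x

open Real Set Filter

lemma cauchyPdf_pos {σ : ℝ} (hσ : 0 < σ) (x : ℝ) : 0 < cauchyPdf 0 σ x := by
  have h := Real.pi_pos
  unfold cauchyPdf
  positivity

lemma cauchyPdf_continuous {σ : ℝ} (hσ : 0 < σ) : Continuous (cauchyPdf 0 σ) := by
  unfold cauchyPdf
  exact continuous_const.mul (continuous_const.div (by continuity) (fun x => by positivity))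

lemma cauchyPdf_eq {σ : ℝ} (hσ : 0 < σ) (x : ℝ) :
    cauchyPdf 0 σ x = (σ / Real.pi * (σ ^ 2)⁻¹) * (1 + (x / σ) ^ 2)⁻¹ := by
  have hπ := Real.pi_ne_zero
  have hσ' : σ ≠ 0 := hσ.ne'
  unfold cauchyPdf
  rw [sub_zero]
  field_simp
  ring

lemma cauchyPdf_integrable {σ : ℝ} (hσ : 0 < σ) : Integrable (cauchyPdf 0 σ) := by
  have h1 : Integrable (fun x : ℝ => (1 + (x / σ) ^ 2)⁻¹) :=
    integrable_inv_one_add_sq.comp_div hσ.ne'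
  have h2 := h1.const_mul (σ / Real.pi * (σ ^ 2)⁻¹)
  have heq : (cauchyPdf 0 σ) = fun x => (σ / Real.pi * (σ ^ 2)⁻¹) * (1 + (x / σ) ^ 2)⁻¹ :=
    funext (cauchyPdf_eq hσ)
  rw [heq]
  exact h2

lemma cauchyPdf_integral {σ : ℝ} (hσ : 0 < σ) : ∫ x, cauchyPdf 0 σ x = 1 := by
  have heq : (cauchyPdf 0 σ) = fun x => (σ / Real.pi * (σ ^ 2)⁻¹) * (1 + (x / σ) ^ 2)⁻¹ :=
    funext (cauchyPdf_eq hσ)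
  rw [heq, MeasureTheory.integral_const_mul]
  have h1 : (∫ x : ℝ, (1 + (x / σ) ^ 2)⁻¹) = |σ| • ∫ y : ℝ, (1 + y ^ 2)⁻¹ :=
    MeasureTheory.Measure.integral_comp_div (fun y => (1 + y ^ 2)⁻¹) σ
  rw [h1, integral_univ_inv_one_add_sq, abs_of_pos hσ, smul_eq_mul]
  have hπ := Real.pi_ne_zero
  have hσ' : σ ≠ 0 := hσ.ne'
  field_simp

lemma cauchy_ratio {s : ℝ} (hs : 0 < s) (x : ℝ) :
    cauchyPdf 0 s x / cauchyPdf 0 1 x = 1 + (s - 1) * ((x ^ 2 - s) / (x ^ 2 + s ^ 2)) := by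
  have hπ := Real.pi_ne_zero
  have h1 : x ^ 2 + s ^ 2 ≠ 0 := by positivity
  have h2 : x ^ 2 + 1 ≠ 0 := by positivity
  unfold cauchyPdf
  rw [sub_zero]
  field_simp
  ring

lemma cauchy_ratio_dist {s : ℝ} (hs : 1 ≤ s) (x : ℝ) :
    |(s - 1) * ((x ^ 2 - s) / (x ^ 2 + s ^ 2))| ≤ s - 1 := by
  have hs0 : (0:ℝ) < s := by linarith
  have h1 : (0:ℝ) < x ^ 2 + s ^ 2 := by positivity
  rw [abs_mul, abs_of_nonneg (by linarith : (0:ℝ) ≤ s - 1)]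
  have h2 : |(x ^ 2 - s) / (x ^ 2 + s ^ 2)| ≤ 1 := by
    rw [abs_div, abs_of_pos h1, div_le_one h1, abs_le]
    constructor <;> nlinarith [sq_nonneg x]
  nlinarith [abs_nonneg ((x ^ 2 - s) / (x ^ 2 + s ^ 2))]

lemma ratio_mem {s : ℝ} (hs1 : 1 < s) (x : ℝ) :
    cauchyPdf 0 s x / cauchyPdf 0 1 x ∈ Set.Icc (2 - s) s := by
  rw [cauchy_ratio (by linarith) x]
  have h := abs_le.mp (cauchy_ratio_dist hs1.le x)
  constructor
  · linarith [h.1]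
  · linarith [h.2]

lemma ratio_continuous {s : ℝ} (hs : 0 < s) :
    Continuous fun x => cauchyPdf 0 s x / cauchyPdf 0 1 x :=
  (cauchyPdf_continuous hs).div (cauchyPdf_continuous one_pos)
    (fun x => (cauchyPdf_pos one_pos x).ne')

lemma integrable_f_ratio {f : ℝ → ℝ} {s : ℝ} (hs1 : 1 < s)
    (hcont : ContinuousOn f (Set.Icc (2 - s) s)) :
    Integrable (fun x => f (cauchyPdf 0 s x / cauchyPdf 0 1 x) * cauchyPdf 0 1 x) := by
  apply Integrable.bdd_mul (c := (isCompact_Icc.exists_bound_of_continuousOn hcont).choose) (cauchyPdf_integrable one_pos)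
  · exact (hcont.comp_continuous (ratio_continuous (by linarith))
      (ratio_mem hs1)).aestronglyMeasurable
  · obtain ⟨C, hC⟩ := isCompact_Icc.exists_bound_of_continuousOn hcont
    exact Filter.Eventually.of_forall fun x => (isCompact_Icc.exists_bound_of_continuousOn hcont).choose_spec _ (ratio_mem hs1 x)

lemma ratio_sub_eq {s : ℝ} (hs : 0 < s) (x : ℝ) :
    (cauchyPdf 0 s x / cauchyPdf 0 1 x - 1) * cauchyPdf 0 1 x
      = cauchyPdf 0 s x - cauchyPdf 0 1 x := by
  have h := (cauchyPdf_pos one_pos x).ne'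
  field_simp

lemma integrable_ratio_sub {s : ℝ} (hs : 0 < s) :
    Integrable (fun x => (cauchyPdf 0 s x / cauchyPdf 0 1 x - 1) * cauchyPdf 0 1 x) := by
  have heq : (fun x => (cauchyPdf 0 s x / cauchyPdf 0 1 x - 1) * cauchyPdf 0 1 x)
      = fun x => cauchyPdf 0 s x - cauchyPdf 0 1 x := funext (ratio_sub_eq hs)
  rw [heq]
  exact (cauchyPdf_integrable hs).sub (cauchyPdf_integrable one_pos)

lemma integral_ratio_sub {s : ℝ} (hs : 0 < s) :
    ∫ x, (cauchyPdf 0 s x / cauchyPdf 0 1 x - 1) * cauchyPdf 0 1 x = 0 := by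
  have heq : (fun x => (cauchyPdf 0 s x / cauchyPdf 0 1 x - 1) * cauchyPdf 0 1 x)
      = fun x => cauchyPdf 0 s x - cauchyPdf 0 1 x := funext (ratio_sub_eq hs)
  rw [heq, integral_sub (cauchyPdf_integrable hs) (cauchyPdf_integrable one_pos),
    cauchyPdf_integral hs, cauchyPdf_integral one_pos, sub_self]

lemma integrable_gpart {f : ℝ → ℝ} (b : ℝ) {s : ℝ} (hs1 : 1 < s)
    (hcont : ContinuousOn f (Set.Icc (2 - s) s)) :
    Integrable (fun x => (f (cauchyPdf 0 s x / cauchyPdf 0 1 x)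
        - b * (cauchyPdf 0 s x / cauchyPdf 0 1 x - 1)) * cauchyPdf 0 1 x) := by
  have heq2 : (fun x => (f (cauchyPdf 0 s x / cauchyPdf 0 1 x)
        - b * (cauchyPdf 0 s x / cauchyPdf 0 1 x - 1)) * cauchyPdf 0 1 x)
      = fun x => f (cauchyPdf 0 s x / cauchyPdf 0 1 x) * cauchyPdf 0 1 x
        - b * ((cauchyPdf 0 s x / cauchyPdf 0 1 x - 1) * cauchyPdf 0 1 x) :=
    funext fun x => by ring
  rw [heq2]
  exact (integrable_f_ratio hs1 hcont).sub ((integrable_ratio_sub (by linarith)).const_mul b)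

lemma fDivCauchy_split {f : ℝ → ℝ} (b : ℝ) {s : ℝ} (hs1 : 1 < s)
    (hcont : ContinuousOn f (Set.Icc (2 - s) s)) :
    fDivCauchy f 1 s = ∫ x,
      (f (cauchyPdf 0 s x / cauchyPdf 0 1 x)
        - b * (cauchyPdf 0 s x / cauchyPdf 0 1 x - 1)) * cauchyPdf 0 1 x := by
  have hs0 : (0:ℝ) < s := by linarith
  have hInt2 := integrable_ratio_sub hs0
  have hInt3 := integrable_gpart b hs1 hcont
  unfold fDivCauchy
  have heq : (fun x => f (cauchyPdf 0 s x / cauchyPdf 0 1 x) * cauchyPdf 0 1 x)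
      = fun x => (f (cauchyPdf 0 s x / cauchyPdf 0 1 x)
          - b * (cauchyPdf 0 s x / cauchyPdf 0 1 x - 1)) * cauchyPdf 0 1 x
        + b * ((cauchyPdf 0 s x / cauchyPdf 0 1 x - 1) * cauchyPdf 0 1 x) :=
    funext fun x => by ring
  rw [heq, integral_add hInt3 (hInt2.const_mul b), MeasureTheory.integral_const_mul,
    integral_ratio_sub hs0, mul_zero, add_zero]

lemma fDivCauchy_bounds {f : ℝ → ℝ} (b M : ℝ) {s : ℝ} (hs1 : 1 < s)
    (hcont : ContinuousOn f (Set.Icc (2 - s) s))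
    (htang : ∀ u : ℝ, 0 < u → b * (u - 1) ≤ f u)
    (hub : ∀ u ∈ Set.Icc (2 - s) s, f u - b * (u - 1) ≤ M * (s - 1) ^ 2) :
    0 ≤ fDivCauchy f 1 s ∧ fDivCauchy f 1 s ≤ M * (s - 1) ^ 2 := by
  have hs0 : (0:ℝ) < s := by linarith
  rw [fDivCauchy_split b hs1 hcont]
  have hInt3 := integrable_gpart b hs1 hcont
  have hpos : ∀ x, 0 ≤ (f (cauchyPdf 0 s x / cauchyPdf 0 1 x)
      - b * (cauchyPdf 0 s x / cauchyPdf 0 1 x - 1)) * cauchyPdf 0 1 x := by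
    intro x
    have hr : 0 < cauchyPdf 0 s x / cauchyPdf 0 1 x :=
      div_pos (cauchyPdf_pos hs0 x) (cauchyPdf_pos one_pos x)
    have h1 := htang _ hr
    have hp := (cauchyPdf_pos one_pos x).le
    nlinarith
  refine ⟨integral_nonneg hpos, ?_⟩
  have hle : ∀ x, (f (cauchyPdf 0 s x / cauchyPdf 0 1 x)
      - b * (cauchyPdf 0 s x / cauchyPdf 0 1 x - 1)) * cauchyPdf 0 1 x
      ≤ (M * (s - 1) ^ 2) * cauchyPdf 0 1 x := by
    intro x
    have h1 := hub _ (ratio_mem hs1 x)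
    have hp := (cauchyPdf_pos one_pos x).le
    nlinarith
  calc (∫ x, (f (cauchyPdf 0 s x / cauchyPdf 0 1 x)
        - b * (cauchyPdf 0 s x / cauchyPdf 0 1 x - 1)) * cauchyPdf 0 1 x)
      ≤ ∫ x, (M * (s - 1) ^ 2) * cauchyPdf 0 1 x :=
        integral_mono hInt3 ((cauchyPdf_integrable one_pos).const_mul _) hle
    _ = M * (s - 1) ^ 2 := by
        rw [MeasureTheory.integral_const_mul, cauchyPdf_integral one_pos, mul_one]

lemma fDivCauchy_pos {f : ℝ → ℝ} (b m : ℝ) {s : ℝ} (hs1 : 1 < s) (hm : 0 < m)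
    (hcont : ContinuousOn f (Set.Icc (2 - s) s))
    (htang : ∀ u : ℝ, 0 < u → b * (u - 1) ≤ f u)
    (hlb : ∀ u ∈ Set.Icc (1 + (3/10) * (s - 1)) s, m ≤ f u - b * (u - 1)) :
    0 < fDivCauchy f 1 s := by
  have hs0 : (0:ℝ) < s := by linarith
  rw [fDivCauchy_split b hs1 hcont]
  have hInt3 := integrable_gpart b hs1 hcont
  set G : ℝ → ℝ := fun x => (f (cauchyPdf 0 s x / cauchyPdf 0 1 x)
      - b * (cauchyPdf 0 s x / cauchyPdf 0 1 x - 1)) * cauchyPdf 0 1 x with hG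
  have hGpos : ∀ x, 0 ≤ G x := by
    intro x
    have hr : 0 < cauchyPdf 0 s x / cauchyPdf 0 1 x :=
      div_pos (cauchyPdf_pos hs0 x) (cauchyPdf_pos one_pos x)
    have h1 := htang _ hr
    have hp := (cauchyPdf_pos one_pos x).le
    simp only [hG]
    nlinarith
  set ρ : ℝ := (1 / Real.pi) * (1 / (9 * s ^ 2 + 1)) with hρ
  have hπ := Real.pi_pos
  have hρpos : 0 < ρ := by rw [hρ]; positivity
  have hEbound : ∀ x ∈ Set.Icc (2 * s) (3 * s), m * ρ ≤ G x := by
    intro x hx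
    obtain ⟨hx1, hx2⟩ := hx
    have hden : (0:ℝ) < x ^ 2 + s ^ 2 := by positivity
    have hrlb : 1 + (3/10) * (s - 1) ≤ cauchyPdf 0 s x / cauchyPdf 0 1 x := by
      rw [cauchy_ratio hs0 x]
      have h1 : (3:ℝ)/10 ≤ (x ^ 2 - s) / (x ^ 2 + s ^ 2) := by
        rw [le_div_iff₀ hden]
        nlinarith
      nlinarith
    have hrub := (ratio_mem hs1 x).2
    have hfm : m ≤ f (cauchyPdf 0 s x / cauchyPdf 0 1 x)
        - b * (cauchyPdf 0 s x / cauchyPdf 0 1 x - 1) := hlb _ ⟨hrlb, hrub⟩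
    have hplb : ρ ≤ cauchyPdf 0 1 x := by
      unfold cauchyPdf
      rw [sub_zero, one_pow, hρ]
      have h3 : (0:ℝ) < x ^ 2 + 1 := by positivity
      have h4 : 1 / (9 * s ^ 2 + 1) ≤ 1 / (x ^ 2 + 1) :=
        one_div_le_one_div_of_le h3 (by nlinarith)
      calc 1 / Real.pi * (1 / (9 * s ^ 2 + 1)) ≤ 1 / Real.pi * (1 / (x ^ 2 + 1)) :=
            mul_le_mul_of_nonneg_left h4 (by positivity)
        _ = 1 / Real.pi * (1 / (x ^ 2 + 1)) := rfl
    simp only [hG]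
    exact mul_le_mul hfm hplb hρpos.le (le_trans hm.le hfm)
  have hmeas : MeasurableSet (Set.Icc (2 * s) (3 * s)) := measurableSet_Icc
  have hvol : (volume (Set.Icc (2 * s) (3 * s))).toReal = s := by
    rw [Real.volume_Icc, ENNReal.toReal_ofReal (by linarith)]
    ring
  have h1 : m * ρ * s ≤ ∫ x in Set.Icc (2 * s) (3 * s), G x := by
    have h2 := MeasureTheory.setIntegral_ge_of_const_le_real hmeas
      (by rw [Real.volume_Icc]; exact ENNReal.ofReal_ne_top) hEbound hInt3.integrableOn
    rwa [measureReal_def, hvol] at h2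
  have h2 : (∫ x in Set.Icc (2 * s) (3 * s), G x) ≤ ∫ x, G x :=
    setIntegral_le_integral hInt3 (Filter.Eventually.of_forall hGpos)
  have h3 : 0 < m * ρ * s := by positivity
  linarith

lemma fDivCauchy_scale (f : ℝ → ℝ) {c : ℝ} (a b : ℝ) (hc : 0 < c) (ha : 0 < a) (hb : 0 < b) :
    fDivCauchy f (c * a) (c * b) = fDivCauchy f a b := by
  unfold fDivCauchy
  have key : ∀ σ : ℝ, 0 < σ → ∀ x : ℝ, cauchyPdf 0 (c * σ) x = c⁻¹ * cauchyPdf 0 σ (c⁻¹ * x) := by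
    intro σ hσ x
    have hc' : c ≠ 0 := hc.ne'
    have hπ := Real.pi_ne_zero
    have hd1 : (x - 0) ^ 2 + (c * σ) ^ 2 ≠ 0 := by positivity
    have hd2 : (c⁻¹ * x - 0) ^ 2 + σ ^ 2 ≠ 0 := by positivity
    unfold cauchyPdf
    rw [sub_zero] at hd1 hd2 ⊢
    rw [sub_zero]
    field_simp
  have h2 : ∀ x, f (cauchyPdf 0 (c * b) x / cauchyPdf 0 (c * a) x) * cauchyPdf 0 (c * a) x
      = c⁻¹ * (f (cauchyPdf 0 b (c⁻¹ * x) / cauchyPdf 0 a (c⁻¹ * x))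
          * cauchyPdf 0 a (c⁻¹ * x)) := by
    intro x
    rw [key b hb, key a ha, mul_div_mul_left _ _ (inv_ne_zero hc.ne')]
    ring
  rw [funext h2, MeasureTheory.integral_const_mul,
    MeasureTheory.Measure.integral_comp_inv_mul_left
      (fun y => f (cauchyPdf 0 b y / cauchyPdf 0 a y) * cauchyPdf 0 a y) c,
    smul_eq_mul, ← mul_assoc, abs_of_pos hc, inv_mul_cancel₀ hc.ne', one_mul]

lemma fDivCauchy_self (f : ℝ → ℝ) (hf1 : f 1 = 0) : fDivCauchy f 1 1 = 0 := by
  unfold fDivCauchy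
  have h : ∀ x : ℝ, f (cauchyPdf 0 1 x / cauchyPdf 0 1 x) * cauchyPdf 0 1 x = 0 := by
    intro x
    rw [div_self (cauchyPdf_pos one_pos x).ne', hf1, zero_mul]
  rw [funext h, integral_zero]

set_option maxHeartbeats 2000000 in
theorem fDiv_pow_not_metric (f : ℝ → ℝ) (hconv : ConvexOn ℝ (Set.Ioi 0) f) (hf1 : f 1 = 0)
    (hC2 : ∃ ε > (0 : ℝ), ContDiffOn ℝ 2 f (Set.Ioo (1 - ε) (1 + ε)))
    (hf'' : 0 < deriv (deriv f) 1) (α : ℝ) (hα : 1 / 2 < α) :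
    ∃ σ₁ σ₂ σ₃ : ℝ, 0 < σ₁ ∧ 0 < σ₂ ∧ 0 < σ₃ ∧
      fDivCauchy f σ₁ σ₃ ^ α > fDivCauchy f σ₁ σ₂ ^ α + fDivCauchy f σ₂ σ₃ ^ α := by
  by_contra hcon
  push_neg at hcon
  have hα0 : (0:ℝ) < α := by linarith
  obtain ⟨ε, hε, hf2⟩ := hC2
  have hUopen : IsOpen (Set.Ioo (1 - ε) (1 + ε)) := isOpen_Ioo
  have h1U : (1:ℝ) ∈ Set.Ioo (1 - ε) (1 + ε) := ⟨by linarith, by linarith⟩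
  have hfd : ∀ u ∈ Set.Ioo (1 - ε) (1 + ε), DifferentiableAt ℝ f u := fun u hu =>
    (hf2.differentiableOn two_ne_zero).differentiableAt (hUopen.mem_nhds hu)
  have hfC1 : ContDiffOn ℝ 1 (deriv f) (Set.Ioo (1 - ε) (1 + ε)) :=
    hf2.deriv_of_isOpen hUopen (by norm_num)
  have hfd1 : ∀ u ∈ Set.Ioo (1 - ε) (1 + ε), DifferentiableAt ℝ (deriv f) u := fun u hu =>
    (hfC1.differentiableOn one_ne_zero).differentiableAt (hUopen.mem_nhds hu)
  have hcont2 : ContinuousOn (deriv (deriv f)) (Set.Ioo (1 - ε) (1 + ε)) :=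
    hfC1.continuousOn_deriv_of_isOpen hUopen le_rfl
  set b := deriv f 1 with hb
  -- choose δ
  have hev : ∀ᶠ u in nhds (1:ℝ), 0 < deriv (deriv f) u ∧ u ∈ Set.Ioo (1 - ε) (1 + ε) := by
    have hcU : ContinuousAt (deriv (deriv f)) 1 :=
      hcont2.continuousAt (hUopen.mem_nhds h1U)
    exact (continuousAt_const.eventually_lt hcU hf'').and (hUopen.eventually_mem h1U)
  obtain ⟨δ', hδ', hball⟩ := Metric.eventually_nhds_iff.mp hev
  set δ : ℝ := min (δ' / 2) (1 / 2) with hδdef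
  have hδpos : 0 < δ := lt_min (by linarith) (by norm_num)
  have hδhalf : δ ≤ 1 / 2 := min_le_right _ _
  have hIccP : ∀ u ∈ Set.Icc (1 - δ) (1 + δ),
      0 < deriv (deriv f) u ∧ u ∈ Set.Ioo (1 - ε) (1 + ε) := by
    intro u hu
    apply hball
    rw [Real.dist_eq, abs_lt]
    have h1 : δ ≤ δ' / 2 := min_le_left _ _
    constructor
    · linarith [hu.1]
    · linarith [hu.2]
  have hIccU : Set.Icc (1 - δ) (1 + δ) ⊆ Set.Ioo (1 - ε) (1 + ε) := fun u hu => (hIccP u hu).2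
  have h1Icc : (1:ℝ) ∈ Set.Icc (1 - δ) (1 + δ) := ⟨by linarith, by linarith⟩
  -- bound on second derivative
  obtain ⟨M₀, hM₀⟩ := isCompact_Icc.exists_bound_of_continuousOn (hcont2.mono hIccU)
  set M : ℝ := max M₀ 1 with hMdef
  have hM1 : (1:ℝ) ≤ M := le_max_right _ _
  have hMpos : (0:ℝ) < M := by linarith
  -- tangent line inequality
  have htang : ∀ u : ℝ, 0 < u → b * (u - 1) ≤ f u := by
    intro u hu
    rcases lt_trichotomy u 1 with h | h | h
    · have hs := hconv.slope_le_deriv (Set.mem_Ioi.mpr hu) (Set.mem_Ioi.mpr one_pos) h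
        (hfd 1 h1U)
      rw [slope_def_field] at hs
      have h1u : (0:ℝ) < 1 - u := by linarith
      rw [div_le_iff₀ h1u, hf1] at hs
      nlinarith
    · rw [h, hf1]; simp
    · have hs := hconv.deriv_le_slope (Set.mem_Ioi.mpr one_pos) (Set.mem_Ioi.mpr hu) h
        (hfd 1 h1U)
      rw [slope_def_field] at hs
      have h1u : (0:ℝ) < u - 1 := by linarith
      rw [le_div_iff₀ h1u, hf1] at hs
      nlinarith
  -- quadratic upper bound
  have hquad : ∀ u ∈ Set.Icc (1 - δ) (1 + δ), f u - b * (u - 1) ≤ M * (u - 1) ^ 2 := by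
    intro u hu
    have hIcc2 : Set.Icc (1 ⊓ u) (1 ⊔ u) ⊆ Set.Icc (1 - δ) (1 + δ) :=
      Set.Icc_subset_Icc (le_inf (by linarith) hu.1) (sup_le (by linarith) hu.2)
    have habs : ∀ v ∈ Set.Icc (1 ⊓ u) (1 ⊔ u), |v - 1| ≤ |u - 1| := by
      intro v hv
      rcases le_total 1 u with h | h
      · rw [inf_of_le_left h, sup_of_le_right h] at hv
        rw [abs_of_nonneg (by linarith [hv.1]), abs_of_nonneg (by linarith)]
        linarith [hv.2]
      · rw [inf_of_le_right h, sup_of_le_left h] at hv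
        rw [abs_of_nonpos (by linarith [hv.2]), abs_of_nonpos (by linarith)]
        linarith [hv.1]
    have hstep1 : ∀ v ∈ Set.Icc (1 ⊓ u) (1 ⊔ u), ‖deriv f v - b‖ ≤ M * |u - 1| := by
      intro v hv
      have h := (convex_Icc (1 - δ) (1 + δ)).norm_image_sub_le_of_norm_deriv_le
        (fun x hx => hfd1 x (hIccU hx))
        (fun x hx => le_trans (hM₀ x hx) (le_max_left M₀ 1))
        h1Icc (hIcc2 hv)
      calc ‖deriv f v - b‖ = ‖deriv f v - deriv f 1‖ := by rw [hb]
        _ ≤ M * ‖v - 1‖ := h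
        _ ≤ M * |u - 1| := by
            rw [Real.norm_eq_abs]
            exact mul_le_mul_of_nonneg_left (habs v hv) hMpos.le
    have hd2 : ∀ x ∈ Set.Icc (1 ⊓ u) (1 ⊔ u),
        HasDerivAt (fun w => f w - b * w) (deriv f x - b) x := by
      intro x hx
      have h1 := (hfd x (hIccU (hIcc2 hx))).hasDerivAt
      exact (h1.sub ((hasDerivAt_id x).const_mul b)).congr_deriv (by simp)
    have hstep2 := (convex_Icc (1 ⊓ u) (1 ⊔ u)).norm_image_sub_le_of_norm_deriv_le
      (f := fun w => f w - b * w)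
      (fun x hx => (hd2 x hx).differentiableAt)
      (fun x hx => by rw [(hd2 x hx).deriv]; exact hstep1 x hx)
      (Set.mem_Icc.mpr ⟨inf_le_left, le_sup_left⟩)
      (Set.mem_Icc.mpr ⟨inf_le_right, le_sup_right⟩)
    have h3 : |(f u - b * u) - (f 1 - b * 1)| ≤ M * |u - 1| * |u - 1| := by
      have := hstep2
      rw [Real.norm_eq_abs, Real.norm_eq_abs] at this
      exact this
    rw [hf1] at h3
    have h5 : f u - b * (u - 1) = (f u - b * u) - (0 - b * 1) := by ring
    calc f u - b * (u - 1) ≤ |(f u - b * u) - (0 - b * 1)| := h5 ▸ le_abs_self _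
      _ ≤ M * |u - 1| * |u - 1| := h3
      _ = M * (u - 1) ^ 2 := by rw [mul_assoc, abs_mul_abs_self]; ring
  -- positivity of the second derivative: strict monotonicity facts
  have hg'pos : ∀ v, 1 < v → v ≤ 1 + δ → 0 < deriv f v - b := by
    have hsm : StrictMonoOn (deriv f) (Set.Icc (1 - δ) (1 + δ)) := by
      apply strictMonoOn_of_deriv_pos (convex_Icc _ _) (hfC1.continuousOn.mono hIccU)
      intro x hx
      rw [interior_Icc] at hx
      exact (hIccP x (Set.Ioo_subset_Icc_self hx)).1
    intro v h1 h2
    have h3 := hsm h1Icc ⟨by linarith, h2⟩ h1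
    rw [← hb] at h3
    linarith
  have hgmono : StrictMonoOn (fun u => f u - b * (u - 1)) (Set.Icc 1 (1 + δ)) := by
    have hsub : Set.Icc (1:ℝ) (1 + δ) ⊆ Set.Icc (1 - δ) (1 + δ) :=
      Set.Icc_subset_Icc (by linarith) le_rfl
    apply strictMonoOn_of_deriv_pos (convex_Icc _ _)
    · exact ((hf2.continuousOn).mono (fun u hu => hIccU (hsub hu))).sub
        ((continuous_const.mul (continuous_id.sub continuous_const)).continuousOn)
    · intro x hx
      rw [interior_Icc] at hx
      have hxI : x ∈ Set.Icc (1 - δ) (1 + δ) := ⟨by linarith [hx.1], hx.2.le⟩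
      have hder : HasDerivAt (fun u => f u - b * (u - 1)) (deriv f x - b) x := by
        have h1 := (hfd x (hIccU hxI)).hasDerivAt
        exact (h1.sub (((hasDerivAt_id x).sub_const 1).const_mul b)).congr_deriv (by simp)
      rw [hder.deriv]
      exact hg'pos x hx.1 hx.2.le
  have hgpos : ∀ u, 1 < u → u ≤ 1 + δ → 0 < f u - b * (u - 1) := by
    intro u h1 h2
    have h := hgmono (Set.left_mem_Icc.mpr (by linarith)) ⟨h1.le, h2⟩ h1
    simpa [hf1] using h
  -- master bounds
  have hbounds : ∀ s : ℝ, 1 < s → s ≤ 1 + δ →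
      0 ≤ fDivCauchy f 1 s ∧ fDivCauchy f 1 s ≤ M * (s - 1) ^ 2 := by
    intro s hs1 hs2
    have hsub : Set.Icc (2 - s) s ⊆ Set.Icc (1 - δ) (1 + δ) :=
      Set.Icc_subset_Icc (by linarith) (by linarith)
    apply fDivCauchy_bounds b M hs1
      ((hf2.continuousOn).mono (fun u hu => hIccU (hsub hu))) htang
    intro u hu
    have h1 := hquad u (hsub hu)
    have h2 : (u - 1) ^ 2 ≤ (s - 1) ^ 2 := by nlinarith [hu.1, hu.2]
    nlinarith
  -- positivity at 1 + δ
  have hs₀1 : (1:ℝ) < 1 + δ := by linarith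
  have hdpos : 0 < fDivCauchy f 1 (1 + δ) := by
    have hsub : Set.Icc (2 - (1 + δ)) (1 + δ) ⊆ Set.Icc (1 - δ) (1 + δ) :=
      Set.Icc_subset_Icc (by linarith) le_rfl
    apply fDivCauchy_pos b (f (1 + 3/10 * δ) - b * ((1 + 3/10 * δ) - 1)) hs₀1
      (hgpos _ (by linarith) (by linarith))
      ((hf2.continuousOn).mono (fun u hu => hIccU (hsub hu))) htang
    intro u hu
    have hu1 : 1 + 3/10 * δ ≤ u := by
      have h := hu.1
      linarith
    have hmem1 : (1 + 3/10 * δ) ∈ Set.Icc (1:ℝ) (1 + δ) := ⟨by linarith, by linarith⟩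
    have hmem2 : u ∈ Set.Icc (1:ℝ) (1 + δ) := ⟨by linarith, hu.2⟩
    have h := hgmono.monotoneOn hmem1 hmem2 hu1
    simpa using h
  -- chain inequality
  have chain : ∀ (n : ℕ) (t : ℝ), 0 < t →
      fDivCauchy f 1 (Real.exp (n * t)) ^ α ≤ n * fDivCauchy f 1 (Real.exp t) ^ α := by
    intro n
    induction n with
    | zero =>
      intro t ht
      simp [Real.exp_zero, fDivCauchy_self f hf1, Real.zero_rpow hα0.ne']
    | succ n ih =>
      intro t ht
      have h1 := hcon 1 (Real.exp (n * t)) (Real.exp ((n + 1 : ℕ) * t)) one_pos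
        (Real.exp_pos _) (Real.exp_pos _)
      have h2 : fDivCauchy f (Real.exp (n * t)) (Real.exp ((n + 1 : ℕ) * t))
          = fDivCauchy f 1 (Real.exp t) := by
        have harg : ((n + 1 : ℕ) : ℝ) * t = ↑n * t + t := by push_cast; ring
        rw [harg, Real.exp_add]
        have h3 := fDivCauchy_scale f 1 (Real.exp t) (Real.exp_pos ((n:ℝ) * t)) one_pos (Real.exp_pos t)
        rw [mul_one] at h3
        exact h3
      rw [h2] at h1
      have h4 := ih t ht
      push_cast
      push_cast at h1 h4
      linarith
  -- final contradiction
  set s₀ : ℝ := 1 + δ with hs₀def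
  have hs₀pos : (0:ℝ) < s₀ := by rw [hs₀def]; linarith
  set d : ℝ := fDivCauchy f 1 s₀ with hddef
  set L : ℝ := Real.log s₀ with hLdef
  have hLpos : 0 < L := by rw [hLdef]; exact Real.log_pos hs₀1
  set C : ℝ := M * s₀ ^ 2 with hCdef
  have hCpos : 0 < C := by rw [hCdef]; exact mul_pos hMpos (pow_pos hs₀pos 2)
  have hexpL : Real.exp L = s₀ := by rw [hLdef]; exact Real.exp_log hs₀pos
  have hbound : ∀ n : ℕ, 1 ≤ n → d ^ α ≤ (C * L ^ 2) ^ α * (n:ℝ) ^ (1 - 2 * α) := by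
    intro n hn
    have hnpos : (0:ℝ) < n := by exact_mod_cast hn
    have ht : 0 < L / n := div_pos hLpos hnpos
    have hs0eq : Real.exp ((n:ℝ) * (L / n)) = s₀ := by
      have harg : (n:ℝ) * (L / n) = L := by field_simp
      rw [harg, hexpL]
    have h1 := chain n (L / n) ht
    rw [hs0eq] at h1
    have he1 : 1 < Real.exp (L / n) := by
      have h := Real.exp_lt_exp.mpr ht
      simpa using h
    have hn1 : (1:ℝ) ≤ (n:ℝ) := by exact_mod_cast hn
    have heL : L / n ≤ L := by
      rw [div_le_iff₀ hnpos]
      nlinarith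
    have he2 : Real.exp (L / n) ≤ s₀ := by
      rw [← hexpL]
      exact Real.exp_le_exp.mpr heL
    obtain ⟨hnn, hub⟩ := hbounds (Real.exp (L / n)) he1 he2
    have h3 : Real.exp (L / n) - 1 ≤ (L / n) * s₀ := by
      have h4 := Real.add_one_le_exp (-(L / n))
      have h5 : (-(L / n) + 1) * Real.exp (L / n) ≤ 1 := by
        have h6 := mul_le_mul_of_nonneg_right h4 (Real.exp_pos (L / n)).le
        rwa [← Real.exp_add, neg_add_cancel, Real.exp_zero] at h6
      have h7 := mul_le_mul_of_nonneg_left he2 ht.le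
      nlinarith [h5, h7]
    have hDub : fDivCauchy f 1 (Real.exp (L / n)) ≤ C * (L / n) ^ 2 := by
      refine hub.trans ?_
      have h7 : 0 ≤ Real.exp (L / n) - 1 := by linarith
      have h6 : (Real.exp (L / n) - 1) ^ 2 ≤ ((L / n) * s₀) ^ 2 := by nlinarith
      calc M * (Real.exp (L / n) - 1) ^ 2 ≤ M * ((L / n) * s₀) ^ 2 :=
          mul_le_mul_of_nonneg_left h6 hMpos.le
        _ = C * (L / n) ^ 2 := by rw [hCdef]; ring
    have h8 : fDivCauchy f 1 (Real.exp (L / n)) ^ α ≤ (C * (L / n) ^ 2) ^ α :=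
      Real.rpow_le_rpow hnn hDub hα0.le
    have h9 : d ^ α ≤ (n:ℝ) * (C * (L / n) ^ 2) ^ α :=
      h1.trans (mul_le_mul_of_nonneg_left h8 (Nat.cast_nonneg n))
    have h10 : C * (L / n) ^ 2 = (C * L ^ 2) / (n:ℝ) ^ 2 := by
      rw [div_pow]; ring
    rw [h10, Real.div_rpow (by positivity) (by positivity)] at h9
    have h11 : ((n:ℝ) ^ 2) ^ α = (n:ℝ) ^ (2 * α) := by
      rw [← Real.rpow_natCast (n:ℝ) 2, ← Real.rpow_mul hnpos.le]
      norm_num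
    rw [h11] at h9
    have h12 : (n:ℝ) * ((C * L ^ 2) ^ α / (n:ℝ) ^ (2 * α))
        = (C * L ^ 2) ^ α * (n:ℝ) ^ (1 - 2 * α) := by
      rw [Real.rpow_sub hnpos, Real.rpow_one]
      ring
    rw [h12] at h9
    exact h9
  have htend : Tendsto (fun n : ℕ => (C * L ^ 2) ^ α * (n:ℝ) ^ (1 - 2 * α)) atTop (nhds 0) := by
    have h1 : Tendsto (fun x : ℝ => x ^ (1 - 2 * α)) atTop (nhds 0) := by
      have h2 := tendsto_rpow_neg_atTop (show (0:ℝ) < 2 * α - 1 by linarith)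
      simpa [show -(2 * α - 1) = 1 - 2 * α by ring] using h2
    have h3 := (h1.comp tendsto_natCast_atTop_atTop).const_mul ((C * L ^ 2) ^ α)
    simpa [Function.comp] using h3
  have hev2 : ∀ᶠ n : ℕ in atTop, (C * L ^ 2) ^ α * (n:ℝ) ^ (1 - 2 * α) < d ^ α :=
    htend.eventually_lt_const (Real.rpow_pos_of_pos hdpos α)
  obtain ⟨n, hn1, hn2⟩ := ((eventually_ge_atTop 1).and hev2).exists
  exact absurd (hbound n hn1) (not_le.mpr hn2)
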